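/- arXiv:1912.01578 — 3 statements merged into one kernel-verified Lean document; each statement's English description precedes it below -/
import Mathlib

section
/- Let v ≥ 2, let f be the effects-type coding of a v-level factor and set A = ∑_{i=1}^v f(i)f(i)ᵀ = Id + J and B = ∑_{i≠j} f(i)f(j)ᵀ = −(Id + J). Then the sum over all pairs (i₁,i₂,i₃,i₄), (j₁,j₂,j₃,j₄) with iₖ ≠ jₖ for all four coordinates of (F(i) − F(j))(F(i) − F(j))ᵀ, where F(i) = f(i₁)⊗f(i₂)⊗f(i₃)⊗f(i₄), equals 2(v-1)⁴ A⊗A⊗A⊗A − 2 B⊗B⊗B⊗B = (1/8)v(v-1)⁴(v³−4v²+6v−4) M⊗M⊗M⊗M, with M = (2/(v-1))(Id+J). -/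
open Kronecker

/-- Effects-type coding of a `v`-level factor. -/
def eff (v : ℕ) (i : Fin v) : Fin (v - 1) → ℝ :=
  fun j => if (i : ℕ) = v - 1 then -1 else if (i : ℕ) = (j : ℕ) then 1 else 0

/-- All-ones matrix. -/
def Jmat (v : ℕ) : Matrix (Fin (v - 1)) (Fin (v - 1)) ℝ := Matrix.of fun _ _ => 1

/-- `A = Id + J = ∑ᵢ f(i)f(i)ᵀ`. -/
noncomputable def Amat (v : ℕ) : Matrix (Fin (v - 1)) (Fin (v - 1)) ℝ := 1 + Jmat v

/-- `B = -(Id + J) = ∑_{i≠j} f(i)f(j)ᵀ`. -/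
noncomputable def Bmat (v : ℕ) : Matrix (Fin (v - 1)) (Fin (v - 1)) ℝ := -(1 + Jmat v)

/-- One-way layout information matrix `M = (2/(v-1))(Id + J)`. -/
noncomputable def Mmat (v : ℕ) : Matrix (Fin (v - 1)) (Fin (v - 1)) ℝ :=
  (2 / ((v : ℝ) - 1)) • ((1 : Matrix (Fin (v - 1)) (Fin (v - 1)) ℝ) + Jmat v)

/-- `F(i) = f(i₁) ⊗ f(i₂) ⊗ f(i₃) ⊗ f(i₄)` (Kronecker product of vectors). -/
def Fvec (v : ℕ) (i : Fin v × Fin v × Fin v × Fin v) :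
    ((Fin (v - 1) × Fin (v - 1)) × Fin (v - 1)) × Fin (v - 1) → ℝ :=
  fun p => eff v i.1 p.1.1.1 * eff v i.2.1 p.1.1.2 * eff v i.2.2.1 p.1.2 * eff v i.2.2.2 p.2

lemma eff_eq (v : ℕ) (hv : 2 ≤ v) (i : Fin v) (a : Fin (v-1)) :
    eff v i a = if i = (⟨v-1, by omega⟩ : Fin v) then -1
      else if i = Fin.castLE (Nat.sub_le v 1) a then 1 else 0 := by
  simp [eff, Fin.ext_iff]

lemma sum_eff (v : ℕ) (hv : 2 ≤ v) (a : Fin (v-1)) : ∑ i : Fin v, eff v i a = 0 := by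
  have ha := a.2
  have hne : Fin.castLE (Nat.sub_le v 1) a ≠ (⟨v-1, by omega⟩ : Fin v) := by
    simp [Fin.ext_iff]; omega
  have key : ∀ i : Fin v, eff v i a =
      (if i = (⟨v-1, by omega⟩ : Fin v) then (-1:ℝ) else 0)
      + (if i = Fin.castLE (Nat.sub_le v 1) a then 1 else 0) := by
    intro i
    rw [eff_eq v hv]
    split_ifs with h1 h2 <;> simp_all
  simp [key, Finset.sum_add_distrib]

lemma sum_eff_mul (v : ℕ) (hv : 2 ≤ v) (a b : Fin (v-1)) :
    ∑ i : Fin v, eff v i a * eff v i b = (if a = b then (1:ℝ) else 0) + 1 := by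
  have ha := a.2; have hb := b.2
  have hne : Fin.castLE (Nat.sub_le v 1) a ≠ (⟨v-1, by omega⟩ : Fin v) := by
    simp [Fin.ext_iff]; omega
  have hab : Fin.castLE (Nat.sub_le v 1) a = Fin.castLE (Nat.sub_le v 1) b ↔ a = b := by
    simp [Fin.ext_iff]
  have key : ∀ i : Fin v, eff v i a * eff v i b =
      (if i = (⟨v-1, by omega⟩ : Fin v) then (1:ℝ) else 0)
      + (if a = b ∧ i = Fin.castLE (Nat.sub_le v 1) a then 1 else 0) := by
    intro i
    rw [eff_eq v hv, eff_eq v hv]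
    split_ifs with h1 h2 h3 h4 h5 h6 h7 <;> simp_all
  simp [key, Finset.sum_add_distrib, ite_and]
  ring

lemma Amat_apply (v : ℕ) (a b : Fin (v-1)) :
    Amat v a b = (if a = b then (1:ℝ) else 0) + 1 := by
  simp [Amat, Jmat, Matrix.one_apply]

lemma Bmat_apply (v : ℕ) (a b : Fin (v-1)) :
    Bmat v a b = -((if a = b then (1:ℝ) else 0) + 1) := by
  simp [Bmat, Jmat, Matrix.one_apply]

lemma L1 (v : ℕ) (hv : 2 ≤ v) (a b : Fin (v-1)) :
    ∑ i : Fin v, ∑ j : Fin v, (if i ≠ j then eff v i a * eff v i b else 0)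
      = ((v:ℝ)-1) * Amat v a b := by
  have inner : ∀ i : Fin v, ∑ j : Fin v, (if i ≠ j then eff v i a * eff v i b else 0)
      = ((v:ℝ)-1) * (eff v i a * eff v i b) := by
    intro i
    have : ∀ j : Fin v, (if i ≠ j then eff v i a * eff v i b else 0)
        = eff v i a * eff v i b - (if i = j then eff v i a * eff v i b else 0) := by
      intro j; by_cases h : i = j <;> simp [h]
    simp [this, Finset.sum_sub_distrib, Finset.sum_const, Finset.card_univ, mul_comm]
    ring
  rw [Finset.sum_congr rfl fun i _ => inner i, ← Finset.mul_sum, sum_eff_mul v hv,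
    Amat_apply]

lemma L1' (v : ℕ) (hv : 2 ≤ v) (a b : Fin (v-1)) :
    ∑ i : Fin v, ∑ j : Fin v, (if i ≠ j then eff v j a * eff v j b else 0)
      = ((v:ℝ)-1) * Amat v a b := by
  rw [Finset.sum_comm]
  simp only [ne_comm]
  exact L1 v hv a b

lemma L2 (v : ℕ) (hv : 2 ≤ v) (a b : Fin (v-1)) :
    ∑ i : Fin v, ∑ j : Fin v, (if i ≠ j then eff v i a * eff v j b else 0)
      = Bmat v a b := by
  have : ∀ i j : Fin v, (if i ≠ j then eff v i a * eff v j b else 0)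
      = eff v i a * eff v j b - (if i = j then eff v i a * eff v j b else 0) := by
    intro i j; by_cases h : i = j <;> simp [h]
  simp only [this, Finset.sum_sub_distrib, Finset.sum_ite_eq, Finset.mem_univ, if_true]
  rw [← Finset.sum_mul_sum, sum_eff v hv, sum_eff_mul v hv, Bmat_apply]
  ring

lemma L2' (v : ℕ) (hv : 2 ≤ v) (a b : Fin (v-1)) :
    ∑ i : Fin v, ∑ j : Fin v, (if i ≠ j then eff v j a * eff v i b else 0)
      = Bmat v a b := by
  rw [Finset.sum_comm]
  simp only [ne_comm]
  exact L2 v hv a b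

lemma factor4 (v : ℕ) (g1 g2 g3 g4 : Fin v → Fin v → ℝ) :
    ∑ i : Fin v × Fin v × Fin v × Fin v, ∑ j : Fin v × Fin v × Fin v × Fin v,
      (if i.1 ≠ j.1 ∧ i.2.1 ≠ j.2.1 ∧ i.2.2.1 ≠ j.2.2.1 ∧ i.2.2.2 ≠ j.2.2.2
        then g1 i.1 j.1 * g2 i.2.1 j.2.1 * g3 i.2.2.1 j.2.2.1 * g4 i.2.2.2 j.2.2.2 else 0)
    = (∑ i : Fin v, ∑ j : Fin v, if i ≠ j then g1 i j else 0)
      * (∑ i : Fin v, ∑ j : Fin v, if i ≠ j then g2 i j else 0)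
      * (∑ i : Fin v, ∑ j : Fin v, if i ≠ j then g3 i j else 0)
      * (∑ i : Fin v, ∑ j : Fin v, if i ≠ j then g4 i j else 0) := by
  have key : ∀ i j : Fin v × Fin v × Fin v × Fin v,
      (if i.1 ≠ j.1 ∧ i.2.1 ≠ j.2.1 ∧ i.2.2.1 ≠ j.2.2.1 ∧ i.2.2.2 ≠ j.2.2.2
        then g1 i.1 j.1 * g2 i.2.1 j.2.1 * g3 i.2.2.1 j.2.2.1 * g4 i.2.2.2 j.2.2.2 else 0)
      = (if i.1 ≠ j.1 then g1 i.1 j.1 else 0) *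
        ((if i.2.1 ≠ j.2.1 then g2 i.2.1 j.2.1 else 0) *
        ((if i.2.2.1 ≠ j.2.2.1 then g3 i.2.2.1 j.2.2.1 else 0) *
        (if i.2.2.2 ≠ j.2.2.2 then g4 i.2.2.2 j.2.2.2 else 0))) := by
    intro i j
    split_ifs <;> simp_all <;> ring
  simp only [key, Fintype.sum_prod_type]
  simp only [← Finset.mul_sum, ← Finset.sum_mul]
  ring

theorem stmt_5 (v : ℕ) (hv : 2 ≤ v) :
    (∑ i : Fin v × Fin v × Fin v × Fin v, ∑ j : Fin v × Fin v × Fin v × Fin v,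
        if i.1 ≠ j.1 ∧ i.2.1 ≠ j.2.1 ∧ i.2.2.1 ≠ j.2.2.1 ∧ i.2.2.2 ≠ j.2.2.2 then
          Matrix.vecMulVec (Fvec v i - Fvec v j) (Fvec v i - Fvec v j) else 0)
      = (2 * ((v : ℝ) - 1) ^ 4) • (Amat v ⊗ₖ Amat v ⊗ₖ Amat v ⊗ₖ Amat v)
        - (2 : ℝ) • (Bmat v ⊗ₖ Bmat v ⊗ₖ Bmat v ⊗ₖ Bmat v) ∧
    (2 * ((v : ℝ) - 1) ^ 4) • (Amat v ⊗ₖ Amat v ⊗ₖ Amat v ⊗ₖ Amat v)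
        - (2 : ℝ) • (Bmat v ⊗ₖ Bmat v ⊗ₖ Bmat v ⊗ₖ Bmat v)
      = ((1 / 8) * (v : ℝ) * ((v : ℝ) - 1) ^ 4
            * ((v : ℝ) ^ 3 - 4 * (v : ℝ) ^ 2 + 6 * (v : ℝ) - 4)) •
          (Mmat v ⊗ₖ Mmat v ⊗ₖ Mmat v ⊗ₖ Mmat v) := by
  constructor
  · ext ⟨⟨⟨a1, a2⟩, a3⟩, a4⟩ ⟨⟨⟨b1, b2⟩, b3⟩, b4⟩
    have entry_ite : ∀ (c : Prop) [Decidable c]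
        (M : Matrix (((Fin (v-1) × Fin (v-1)) × Fin (v-1)) × Fin (v-1))
          (((Fin (v-1) × Fin (v-1)) × Fin (v-1)) × Fin (v-1)) ℝ),
        (if c then M else 0) (((a1, a2), a3), a4) (((b1, b2), b3), b4)
          = if c then M (((a1, a2), a3), a4) (((b1, b2), b3), b4) else 0 := by
      intro c _ M; split_ifs <;> rfl
    simp only [Matrix.sum_apply, entry_ite, Matrix.vecMulVec_apply, Pi.sub_apply]
    have split : ∀ i j : Fin v × Fin v × Fin v × Fin v,
        (if i.1 ≠ j.1 ∧ i.2.1 ≠ j.2.1 ∧ i.2.2.1 ≠ j.2.2.1 ∧ i.2.2.2 ≠ j.2.2.2 then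
          (Fvec v i (((a1, a2), a3), a4) - Fvec v j (((a1, a2), a3), a4)) *
          (Fvec v i (((b1, b2), b3), b4) - Fvec v j (((b1, b2), b3), b4)) else 0)
        = (if i.1 ≠ j.1 ∧ i.2.1 ≠ j.2.1 ∧ i.2.2.1 ≠ j.2.2.1 ∧ i.2.2.2 ≠ j.2.2.2 then
            (eff v i.1 a1 * eff v i.1 b1) * (eff v i.2.1 a2 * eff v i.2.1 b2) *
            (eff v i.2.2.1 a3 * eff v i.2.2.1 b3) * (eff v i.2.2.2 a4 * eff v i.2.2.2 b4) else 0)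
        + (if i.1 ≠ j.1 ∧ i.2.1 ≠ j.2.1 ∧ i.2.2.1 ≠ j.2.2.1 ∧ i.2.2.2 ≠ j.2.2.2 then
            (eff v j.1 a1 * eff v j.1 b1) * (eff v j.2.1 a2 * eff v j.2.1 b2) *
            (eff v j.2.2.1 a3 * eff v j.2.2.1 b3) * (eff v j.2.2.2 a4 * eff v j.2.2.2 b4) else 0)
        - (if i.1 ≠ j.1 ∧ i.2.1 ≠ j.2.1 ∧ i.2.2.1 ≠ j.2.2.1 ∧ i.2.2.2 ≠ j.2.2.2 then
            (eff v i.1 a1 * eff v j.1 b1) * (eff v i.2.1 a2 * eff v j.2.1 b2) *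
            (eff v i.2.2.1 a3 * eff v j.2.2.1 b3) * (eff v i.2.2.2 a4 * eff v j.2.2.2 b4) else 0)
        - (if i.1 ≠ j.1 ∧ i.2.1 ≠ j.2.1 ∧ i.2.2.1 ≠ j.2.2.1 ∧ i.2.2.2 ≠ j.2.2.2 then
            (eff v j.1 a1 * eff v i.1 b1) * (eff v j.2.1 a2 * eff v i.2.1 b2) *
            (eff v j.2.2.1 a3 * eff v i.2.2.1 b3) * (eff v j.2.2.2 a4 * eff v i.2.2.2 b4) else 0) := by
      intro i j
      by_cases h : i.1 ≠ j.1 ∧ i.2.1 ≠ j.2.1 ∧ i.2.2.1 ≠ j.2.2.1 ∧ i.2.2.2 ≠ j.2.2.2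
      · simp only [Fvec, if_pos h]; ring
      · simp [h]
    simp only [split, Finset.sum_add_distrib, Finset.sum_sub_distrib]
    have h1 := factor4 v (fun x _ => eff v x a1 * eff v x b1)
      (fun x _ => eff v x a2 * eff v x b2) (fun x _ => eff v x a3 * eff v x b3)
      (fun x _ => eff v x a4 * eff v x b4)
    have h2 := factor4 v (fun _ y => eff v y a1 * eff v y b1)
      (fun _ y => eff v y a2 * eff v y b2) (fun _ y => eff v y a3 * eff v y b3)
      (fun _ y => eff v y a4 * eff v y b4)
    have h3 := factor4 v (fun x y => eff v x a1 * eff v y b1)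
      (fun x y => eff v x a2 * eff v y b2) (fun x y => eff v x a3 * eff v y b3)
      (fun x y => eff v x a4 * eff v y b4)
    have h4 := factor4 v (fun x y => eff v y a1 * eff v x b1)
      (fun x y => eff v y a2 * eff v x b2) (fun x y => eff v y a3 * eff v x b3)
      (fun x y => eff v y a4 * eff v x b4)
    beta_reduce at h1 h2 h3 h4
    rw [h1, h2, h3, h4, L1 v hv a1 b1, L1 v hv a2 b2, L1 v hv a3 b3, L1 v hv a4 b4,
      L1' v hv a1 b1, L1' v hv a2 b2, L1' v hv a3 b3, L1' v hv a4 b4,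
      L2 v hv a1 b1, L2 v hv a2 b2, L2 v hv a3 b3, L2 v hv a4 b4,
      L2' v hv a1 b1, L2' v hv a2 b2, L2' v hv a3 b3, L2' v hv a4 b4]
    simp only [Matrix.sub_apply, Matrix.smul_apply, Matrix.kroneckerMap_apply,
      smul_eq_mul]
    ring
  · have hv1 : ((v : ℝ) - 1) ≠ 0 := by
      have : (2:ℝ) ≤ (v:ℝ) := by exact_mod_cast hv
      intro h; nlinarith
    set P : Matrix (Fin (v-1)) (Fin (v-1)) ℝ := 1 + Jmat v with hP
    have hA : Amat v = P := rfl
    have hB : Bmat v = (-1 : ℝ) • P := by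
      rw [neg_one_smul]; rfl
    have hM : Mmat v = (2 / ((v : ℝ) - 1)) • P := rfl
    rw [hA, hB, hM]
    simp only [Matrix.smul_kronecker, Matrix.kronecker_smul, smul_smul]
    rw [← sub_smul]
    congr 1
    field_simp
    ring
end

section
/- With v ≥ 2, A = Id + J, B = −(Id+J), M = (2/(v-1))(Id+J): the sum of (F(i)−F(j))(F(i)−F(j))ᵀ over all pairs of 4-tuples with i₁≠j₁ and i₂=j₂, i₃=j₃, i₄=j₄ equals 2(v-1) A^{⊗4} − 2 B ⊗ A^{⊗3} = (1/8)v(v-1)⁴ M^{⊗4}. -/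
open Kronecker

lemma eff_sum (v : ℕ) (a : Fin (v - 1)) : ∑ i : Fin v, eff v i a = 0 := by
  have ha : (a : ℕ) < v - 1 := a.isLt
  set iv : Fin v := ⟨v - 1, by omega⟩ with hiv
  set ia : Fin v := ⟨(a : ℕ), by omega⟩ with hia
  have hne : iv ≠ ia := by
    simp only [Fin.ne_iff_vne, iv, ia]
    omega
  rw [← Finset.sum_subset (Finset.subset_univ {iv, ia})]
  · rw [Finset.sum_pair hne]
    have h1 : eff v iv a = -1 := by simp [eff, iv]
    have h2 : eff v ia a = 1 := by simp [eff, ia, Nat.ne_of_lt ha]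
    rw [h1, h2]; ring
  · intro x _ hx
    simp only [Finset.mem_insert, Finset.mem_singleton] at hx
    push_neg at hx
    have h1 : (x : ℕ) ≠ v - 1 := fun h => hx.1 (Fin.ext h)
    have h2 : (x : ℕ) ≠ (a : ℕ) := fun h => hx.2 (Fin.ext h)
    simp [eff, h1, h2]

lemma eff_sum_mul (v : ℕ) (a b : Fin (v - 1)) :
    ∑ i : Fin v, eff v i a * eff v i b = Amat v a b := by
  have ha : (a : ℕ) < v - 1 := a.isLt
  set iv : Fin v := ⟨v - 1, by omega⟩ with hiv
  set ia : Fin v := ⟨(a : ℕ), by omega⟩ with hia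
  have hne : iv ≠ ia := by
    simp only [Fin.ne_iff_vne, iv, ia]
    omega
  rw [← Finset.sum_subset (Finset.subset_univ {iv, ia})]
  · rw [Finset.sum_pair hne]
    have h1 : eff v iv a = -1 := by simp [eff, iv]
    have h1' : eff v iv b = -1 := by simp [eff, iv]
    have h2 : eff v ia a = 1 := by simp [eff, ia, Nat.ne_of_lt ha]
    have h2' : eff v ia b = if a = b then 1 else 0 := by
      simp [eff, ia, Nat.ne_of_lt ha, Fin.ext_iff]
    rw [h1, h1', h2, h2']
    simp [Amat, Jmat, Matrix.one_apply]
    split <;> ring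
  · intro x _ hx
    simp only [Finset.mem_insert, Finset.mem_singleton] at hx
    push_neg at hx
    have h1 : (x : ℕ) ≠ v - 1 := fun h => hx.1 (Fin.ext h)
    have h2 : (x : ℕ) ≠ (a : ℕ) := fun h => hx.2 (Fin.ext h)
    simp [eff, h1, h2]

lemma kron_sum_right {ι m n p q : Type*} [Fintype ι] [Fintype n] [Fintype q]
    (C : Matrix m n ℝ) (M : ι → Matrix p q ℝ) :
    ∑ x : ι, C ⊗ₖ M x = C ⊗ₖ ∑ x : ι, M x := by
  ext ⟨a, b⟩ ⟨c, d⟩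
  simp [Matrix.sum_apply, Matrix.kroneckerMap_apply, Finset.mul_sum]

lemma kron_sum_left {ι m n p q : Type*} [Fintype ι] [Fintype n] [Fintype q]
    (C : Matrix p q ℝ) (M : ι → Matrix m n ℝ) :
    ∑ x : ι, M x ⊗ₖ C = (∑ x : ι, M x) ⊗ₖ C := by
  ext ⟨a, b⟩ ⟨c, d⟩
  simp [Matrix.sum_apply, Matrix.kroneckerMap_apply, Finset.sum_mul]

/-- `V(k) = f(k)f(k)ᵀ`. -/
noncomputable def Vv (v : ℕ) (k : Fin v) : Matrix (Fin (v - 1)) (Fin (v - 1)) ℝ :=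
  Matrix.vecMulVec (eff v k) (eff v k)

lemma sum_Vv (v : ℕ) : ∑ k : Fin v, Vv v k = Amat v := by
  ext a b
  simp only [Matrix.sum_apply, Vv, Matrix.vecMulVec_apply]
  exact eff_sum_mul v a b

lemma sum_Dm (v : ℕ) :
    ∑ i : Fin v, ∑ j : Fin v,
        Matrix.vecMulVec (eff v i - eff v j) (eff v i - eff v j)
      = (2 * (v : ℝ)) • Amat v := by
  ext a b
  simp only [Matrix.sum_apply, Matrix.vecMulVec_apply, Pi.sub_apply, Matrix.smul_apply,
    smul_eq_mul]
  have expand : ∀ i j : Fin v,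
      (eff v i a - eff v j a) * (eff v i b - eff v j b)
        = eff v i a * eff v i b + eff v j a * eff v j b
          - (eff v i a * eff v j b + eff v j a * eff v i b) := by
    intro i j; ring
  simp_rw [expand, Finset.sum_sub_distrib, Finset.sum_add_distrib]
  have h1 : ∑ _i : Fin v, ∑ j : Fin v, eff v j a * eff v j b
      = (v : ℝ) * Amat v a b := by
    simp [eff_sum_mul, Finset.sum_const, mul_comm]
  have h2 : ∑ i : Fin v, ∑ _j : Fin v, eff v i a * eff v i b
      = (v : ℝ) * Amat v a b := by
    simp [Finset.sum_const, ← Finset.sum_mul, eff_sum_mul, mul_comm]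
  have h3 : ∑ i : Fin v, ∑ j : Fin v, eff v i a * eff v j b = 0 := by
    rw [← Finset.sum_mul_sum, eff_sum, zero_mul]
  have h4 : ∑ i : Fin v, ∑ j : Fin v, eff v j a * eff v i b = 0 := by
    rw [Finset.sum_comm, ← Finset.sum_mul_sum, eff_sum, zero_mul]
  rw [h1, h2, h3, h4]
  ring

theorem stmt_7 (v : ℕ) (hv : 2 ≤ v) :
    (∑ i : Fin v × Fin v × Fin v × Fin v, ∑ j : Fin v × Fin v × Fin v × Fin v,
        if i.1 ≠ j.1 ∧ i.2.1 = j.2.1 ∧ i.2.2.1 = j.2.2.1 ∧ i.2.2.2 = j.2.2.2 then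
          Matrix.vecMulVec (Fvec v i - Fvec v j) (Fvec v i - Fvec v j) else 0)
      = (2 * ((v : ℝ) - 1)) • (Amat v ⊗ₖ Amat v ⊗ₖ Amat v ⊗ₖ Amat v)
        - (2 : ℝ) • (Bmat v ⊗ₖ Amat v ⊗ₖ Amat v ⊗ₖ Amat v) ∧
    (2 * ((v : ℝ) - 1)) • (Amat v ⊗ₖ Amat v ⊗ₖ Amat v ⊗ₖ Amat v)
        - (2 : ℝ) • (Bmat v ⊗ₖ Amat v ⊗ₖ Amat v ⊗ₖ Amat v)
      = ((1 / 8) * (v : ℝ) * ((v : ℝ) - 1) ^ 4) •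
          (Mmat v ⊗ₖ Mmat v ⊗ₖ Mmat v ⊗ₖ Mmat v) := by
  have hvR : (2 : ℝ) ≤ (v : ℝ) := by exact_mod_cast hv
  have hne : ((v : ℝ) - 1) ≠ 0 := by linarith
  set K : Matrix _ _ ℝ := Amat v ⊗ₖ Amat v ⊗ₖ Amat v ⊗ₖ Amat v with hK
  have hB : Bmat v = (-1 : ℝ) • Amat v := by
    rw [neg_one_smul]; rfl
  have hRHS : (2 * ((v : ℝ) - 1)) • K - (2 : ℝ) • (Bmat v ⊗ₖ Amat v ⊗ₖ Amat v ⊗ₖ Amat v)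
      = (2 * (v : ℝ)) • K := by
    rw [hB]
    simp only [Matrix.smul_kronecker, smul_smul, hK]
    rw [← sub_smul]
    congr 1
    ring
  constructor
  · have hterm : ∀ i j : Fin v × Fin v × Fin v × Fin v,
        (if i.1 ≠ j.1 ∧ i.2.1 = j.2.1 ∧ i.2.2.1 = j.2.2.1 ∧ i.2.2.2 = j.2.2.2 then
            Matrix.vecMulVec (Fvec v i - Fvec v j) (Fvec v i - Fvec v j) else 0)
          = if i.2 = j.2 then
              Matrix.vecMulVec (Fvec v i - Fvec v j) (Fvec v i - Fvec v j) else 0 := by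
      intro i j
      have h2eq : (i.2 = j.2) ↔
          (i.2.1 = j.2.1 ∧ i.2.2.1 = j.2.2.1 ∧ i.2.2.2 = j.2.2.2) := by
        simp [Prod.ext_iff]
      by_cases hc : i.2 = j.2
      · by_cases h1 : i.1 = j.1
        · have hij : i = j := Prod.ext h1 hc
          rw [if_neg (by simp [h1]), if_pos hc, hij]
          simp [Matrix.vecMulVec_eq]
        · rw [if_pos ⟨h1, h2eq.mp hc⟩, if_pos hc]
      · rw [if_neg (fun h => hc (h2eq.mpr h.2)), if_neg hc]
    calc (∑ i : Fin v × Fin v × Fin v × Fin v, ∑ j : Fin v × Fin v × Fin v × Fin v,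
        if i.1 ≠ j.1 ∧ i.2.1 = j.2.1 ∧ i.2.2.1 = j.2.2.1 ∧ i.2.2.2 = j.2.2.2 then
          Matrix.vecMulVec (Fvec v i - Fvec v j) (Fvec v i - Fvec v j) else 0)
        = ∑ i : Fin v × Fin v × Fin v × Fin v, ∑ j : Fin v × Fin v × Fin v × Fin v,
            (if i.2 = j.2 then
              Matrix.vecMulVec (Fvec v i - Fvec v j) (Fvec v i - Fvec v j) else 0) :=
          Finset.sum_congr rfl fun i _ => Finset.sum_congr rfl fun j _ => hterm i j
      _ = ∑ i : Fin v × Fin v × Fin v × Fin v, ∑ j1 : Fin v,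
            Matrix.vecMulVec (Fvec v i - Fvec v (j1, i.2)) (Fvec v i - Fvec v (j1, i.2)) := by
          refine Finset.sum_congr rfl fun i _ => ?_
          rw [Fintype.sum_prod_type]
          refine Finset.sum_congr rfl fun j1 _ => ?_
          rw [Finset.sum_ite_eq]
          simp
      _ = ∑ i1 : Fin v, ∑ r : Fin v × Fin v × Fin v, ∑ j1 : Fin v,
            Matrix.vecMulVec (Fvec v (i1, r) - Fvec v (j1, r))
              (Fvec v (i1, r) - Fvec v (j1, r)) :=
          Fintype.sum_prod_type _
      _ = ∑ i1 : Fin v, ∑ r : Fin v × Fin v × Fin v, ∑ j1 : Fin v,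
            ((Matrix.vecMulVec (eff v i1 - eff v j1) (eff v i1 - eff v j1)
              ⊗ₖ Vv v r.1) ⊗ₖ Vv v r.2.1) ⊗ₖ Vv v r.2.2 := by
          refine Finset.sum_congr rfl fun i1 _ => Finset.sum_congr rfl fun r _ =>
            Finset.sum_congr rfl fun j1 _ => ?_
          ext ⟨⟨⟨a, b⟩, c⟩, d⟩ ⟨⟨⟨a', b'⟩, c'⟩, d'⟩
          simp [Fvec, Vv, Matrix.vecMulVec_apply, Matrix.kroneckerMap_apply, Pi.sub_apply]
          ring
      _ = ∑ i1 : Fin v, ∑ j1 : Fin v, ∑ r : Fin v × Fin v × Fin v,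
            ((Matrix.vecMulVec (eff v i1 - eff v j1) (eff v i1 - eff v j1)
              ⊗ₖ Vv v r.1) ⊗ₖ Vv v r.2.1) ⊗ₖ Vv v r.2.2 :=
          Finset.sum_congr rfl fun i1 _ => Finset.sum_comm
      _ = (2 * (v : ℝ)) • K := by
          simp only [Fintype.sum_prod_type, kron_sum_right, kron_sum_left, sum_Vv]
          rw [sum_Dm]
          simp only [Matrix.smul_kronecker, hK]
      _ = (2 * ((v : ℝ) - 1)) • K - (2 : ℝ) • (Bmat v ⊗ₖ Amat v ⊗ₖ Amat v ⊗ₖ Amat v) :=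
          hRHS.symm
  · rw [hRHS]
    have hM : Mmat v = (2 / ((v : ℝ) - 1)) • Amat v := rfl
    rw [hM]
    simp only [Matrix.smul_kronecker, Matrix.kronecker_smul, smul_smul, hK]
    congr 1
    field_simp
    ring
end

section
/- Let p(d) be a real polynomial of degree 4 with negative leading coefficient and let c be a real number with p(d) ≤ c for all integers d in {0, 1, …, S}. Then the set of integers d ∈ {1,…,S-1} with p(d) = c has cardinality at most 4, and moreover it is contained in a union of two pairs of adjacent integers {d*, d*+1} ∪ {d₁*, d₁*+1}. -/
open Polynomial Multiset Set

/-- If `w` is a simple root of `q` and `q` is nonnegative at `w ± 1`,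
then `q` has another root in `[w-1, w+1]`. -/
lemma companion_aux (q : Polynomial ℝ) (hq : q ≠ 0) (w : ℝ)
    (hm : rootMultiplicity w q = 1)
    (hl : 0 ≤ q.eval (w - 1)) (hr : 0 ≤ q.eval (w + 1)) :
    ∃ y, q.eval y = 0 ∧ y ∈ Set.Icc (w - 1) (w + 1) ∧ y ≠ w := by
  set r := q /ₘ (X - C w) ^ rootMultiplicity w q with hrdef
  have hfac : (X - C w) * r = q := by
    have h := pow_mul_divByMonic_rootMultiplicity_eq q w
    rw [← hrdef] at h
    rw [hm, pow_one] at h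
    exact h
  have hrw : r.eval w ≠ 0 := eval_divByMonic_pow_rootMultiplicity_ne_zero w hq
  have hcont : Continuous fun x => r.eval x := r.continuous
  rcases hrw.lt_or_gt with hneg | hpos
  · -- r w < 0 : q < 0 just to the right of w
    have hopen : IsOpen {x : ℝ | r.eval x < 0} := isOpen_lt hcont continuous_const
    obtain ⟨ε, hε, hball⟩ := Metric.isOpen_iff.mp hopen w hneg
    set δ : ℝ := min (ε / 2) (1 / 2) with hδdef
    have hδ0 : 0 < δ := by positivity
    have hδ1 : δ ≤ 1 / 2 := min_le_right _ _
    have hmem : w + δ ∈ Metric.ball w ε := by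
      simp only [Metric.mem_ball, Real.dist_eq]
      rw [abs_of_pos (by linarith [hδ0] : (0:ℝ) < w + δ - w)]
      have : δ ≤ ε / 2 := min_le_left _ _
      linarith
    have hrneg : r.eval (w + δ) < 0 := hball hmem
    have hqneg : q.eval (w + δ) < 0 := by
      rw [← hfac]
      simp only [eval_mul, eval_sub, eval_X, eval_C]
      nlinarith
    have hIVT := intermediate_value_Icc (by linarith : w + δ ≤ w + 1)
      (q.continuous.continuousOn (s := Set.Icc (w + δ) (w + 1)))
    have h0 : (0:ℝ) ∈ Set.Icc (q.eval (w + δ)) (q.eval (w + 1)) := ⟨le_of_lt hqneg, hr⟩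
    obtain ⟨y, hy, hy0⟩ := hIVT h0
    exact ⟨y, hy0, ⟨by linarith [hy.1], hy.2⟩, by intro h; subst h; linarith [hy.1]⟩
  · -- r w > 0 : q < 0 just to the left of w
    have hopen : IsOpen {x : ℝ | 0 < r.eval x} := isOpen_lt continuous_const hcont
    obtain ⟨ε, hε, hball⟩ := Metric.isOpen_iff.mp hopen w hpos
    set δ : ℝ := min (ε / 2) (1 / 2) with hδdef
    have hδ0 : 0 < δ := by positivity
    have hδ1 : δ ≤ 1 / 2 := min_le_right _ _
    have hmem : w - δ ∈ Metric.ball w ε := by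
      simp only [Metric.mem_ball, Real.dist_eq]
      rw [abs_of_neg (by linarith [hδ0] : w - δ - w < 0)]
      have : δ ≤ ε / 2 := min_le_left _ _
      linarith
    have hrpos : 0 < r.eval (w - δ) := hball hmem
    have hqneg : q.eval (w - δ) < 0 := by
      rw [← hfac]
      simp only [eval_mul, eval_sub, eval_X, eval_C]
      nlinarith
    have hIVT := intermediate_value_Icc' (by linarith : w - 1 ≤ w - δ)
      (q.continuous.continuousOn (s := Set.Icc (w - 1) (w - δ)))
    have h0 : (0:ℝ) ∈ Set.Icc (q.eval (w - δ)) (q.eval (w - 1)) := ⟨le_of_lt hqneg, hl⟩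
    obtain ⟨y, hy, hy0⟩ := hIVT h0
    exact ⟨y, hy0, ⟨hy.1, by linarith [hy.2]⟩, by intro h; subst h; linarith [hy.2]⟩

/-- A root of `q` at `d` with `q ≥ 0` at `d ± 1` contributes at least two roots
(with multiplicity) in `[d-1, d+1]`. -/
lemma group_two (q : Polynomial ℝ) (hq : q ≠ 0) (d : ℝ) (ed : q.eval d = 0)
    (h1 : 0 ≤ q.eval (d - 1)) (h2 : 0 ≤ q.eval (d + 1)) :
    2 ≤ Multiset.card (q.roots.filter (fun y => y ∈ Set.Icc (d - 1) (d + 1))) := by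
  classical
  have hd : d ∈ q.roots := (mem_roots'.mpr ⟨hq, ed⟩)
  have hdI : d ∈ Set.Icc (d - 1) (d + 1) := ⟨by linarith, by linarith⟩
  rcases Nat.lt_or_ge (q.roots.count d) 2 with hm | hm
  · have hm1 : q.roots.count d = 1 := by
      have := Multiset.one_le_count_iff_mem.mpr hd
      omega
    have hmult : rootMultiplicity d q = 1 := by rw [← q.count_roots]; exact hm1
    obtain ⟨y, hy0, hyI, hyne⟩ := companion_aux q hq d hmult h1 h2
    have hy : y ∈ q.roots := mem_roots'.mpr ⟨hq, hy0⟩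
    have hsub : ({y, d} : Multiset ℝ) ≤ q.roots.filter (fun y => y ∈ Set.Icc (d - 1) (d + 1)) := by
      refine (Multiset.le_iff_subset (by simp [hyne])).mpr ?_
      intro t ht
      simp only [Multiset.insert_eq_cons, Multiset.mem_cons, Multiset.mem_singleton] at ht
      rcases ht with rfl | rfl
      · exact Multiset.mem_filter.mpr ⟨hy, hyI⟩
      · exact Multiset.mem_filter.mpr ⟨hd, hdI⟩
    have := Multiset.card_le_card hsub
    simpa using this
  · have hcount : (q.roots.filter (fun y => y ∈ Set.Icc (d - 1) (d + 1))).count d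
        = q.roots.count d := Multiset.count_filter_of_pos hdI
    calc 2 ≤ q.roots.count d := hm
      _ = _ := hcount.symm
      _ ≤ _ := Multiset.count_le_card _ _

/-- With at most 4 roots and 4 given increasing roots, the root multiset is exactly those. -/
lemma roots_eq_four (q : Polynomial ℝ) (hq : q ≠ 0) (h4 : Multiset.card q.roots ≤ 4)
    (x1 x2 x3 x4 : ℝ) (h12 : x1 < x2) (h23 : x2 < x3) (h34 : x3 < x4)
    (e1 : q.eval x1 = 0) (e2 : q.eval x2 = 0) (e3 : q.eval x3 = 0) (e4 : q.eval x4 = 0) :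
    q.roots = {x1, x2, x3, x4} := by
  classical
  have n12 : x1 ≠ x2 := ne_of_lt h12
  have n13 : x1 ≠ x3 := by intro h; linarith
  have n14 : x1 ≠ x4 := by intro h; linarith
  have n23 : x2 ≠ x3 := ne_of_lt h23
  have n24 : x2 ≠ x4 := by intro h; linarith
  have n34 : x3 ≠ x4 := ne_of_lt h34
  have hnd : ({x1, x2, x3, x4} : Multiset ℝ).Nodup := by
    simp [Multiset.insert_eq_cons, Multiset.nodup_cons, n12, n13, n14, n23, n24, n34]
  have hle : ({x1, x2, x3, x4} : Multiset ℝ) ≤ q.roots := by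
    refine (Multiset.le_iff_subset hnd).mpr ?_
    intro t ht
    simp only [Multiset.insert_eq_cons, Multiset.mem_cons, Multiset.mem_singleton] at ht
    rcases ht with rfl | rfl | rfl | rfl
    · exact mem_roots'.mpr ⟨hq, e1⟩
    · exact mem_roots'.mpr ⟨hq, e2⟩
    · exact mem_roots'.mpr ⟨hq, e3⟩
    · exact mem_roots'.mpr ⟨hq, e4⟩
  exact (Multiset.eq_of_le_of_card_le hle (by simpa using h4)).symm

/-- Four roots, sorted, the largest at distance ≥ 2 from the rest: impossible. -/
lemma gapMax (q : Polynomial ℝ) (hq : q ≠ 0) (h4 : Multiset.card q.roots ≤ 4)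
    (x1 x2 x3 x4 : ℝ) (h12 : x1 < x2) (h23 : x2 < x3) (h34 : x3 + 2 ≤ x4)
    (e1 : q.eval x1 = 0) (e2 : q.eval x2 = 0) (e3 : q.eval x3 = 0) (e4 : q.eval x4 = 0)
    (hl : 0 ≤ q.eval (x4 - 1)) (hr : 0 ≤ q.eval (x4 + 1)) : False := by
  classical
  have hroots := roots_eq_four q hq h4 x1 x2 x3 x4 h12 h23 (by linarith) e1 e2 e3 e4
  have hcount : q.roots.count x4 = 1 := by
    rw [hroots]
    have n1 : x4 ≠ x1 := by intro h; linarith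
    have n2 : x4 ≠ x2 := by intro h; linarith
    have n3 : x4 ≠ x3 := by intro h; linarith
    simp [Multiset.insert_eq_cons, Multiset.count_cons, Multiset.count_singleton, n1, n2, n3]
  have hmult : rootMultiplicity x4 q = 1 := by rw [← q.count_roots]; exact hcount
  obtain ⟨y, hy0, hyI, hyne⟩ := companion_aux q hq x4 hmult hl hr
  have hy : y ∈ q.roots := mem_roots'.mpr ⟨hq, hy0⟩
  rw [hroots] at hy
  simp only [Multiset.insert_eq_cons, Multiset.mem_cons, Multiset.mem_singleton] at hy
  have hyge := hyI.1
  rcases hy with rfl | rfl | rfl | rfl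
  · linarith
  · linarith
  · linarith
  · exact hyne rfl

/-- Four roots, sorted, the smallest at distance ≥ 2 from the rest: impossible. -/
lemma gapMin (q : Polynomial ℝ) (hq : q ≠ 0) (h4 : Multiset.card q.roots ≤ 4)
    (x1 x2 x3 x4 : ℝ) (h12 : x1 + 2 ≤ x2) (h23 : x2 < x3) (h34 : x3 < x4)
    (e1 : q.eval x1 = 0) (e2 : q.eval x2 = 0) (e3 : q.eval x3 = 0) (e4 : q.eval x4 = 0)
    (hl : 0 ≤ q.eval (x1 - 1)) (hr : 0 ≤ q.eval (x1 + 1)) : False := by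
  classical
  have hroots := roots_eq_four q hq h4 x1 x2 x3 x4 (by linarith) h23 h34 e1 e2 e3 e4
  have hcount : q.roots.count x1 = 1 := by
    rw [hroots]
    have n2 : x1 ≠ x2 := by intro h; linarith
    have n3 : x1 ≠ x3 := by intro h; linarith
    have n4 : x1 ≠ x4 := by intro h; linarith
    simp [Multiset.insert_eq_cons, Multiset.count_cons, Multiset.count_singleton, n2, n3, n4]
  have hmult : rootMultiplicity x1 q = 1 := by rw [← q.count_roots]; exact hcount
  obtain ⟨y, hy0, hyI, hyne⟩ := companion_aux q hq x1 hmult hl hr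
  have hy : y ∈ q.roots := mem_roots'.mpr ⟨hq, hy0⟩
  rw [hroots] at hy
  simp only [Multiset.insert_eq_cons, Multiset.mem_cons, Multiset.mem_singleton] at hy
  have hyle := hyI.2
  rcases hy with rfl | rfl | rfl | rfl
  · exact hyne rfl
  · linarith
  · linarith
  · linarith

/-- Three roots pairwise at distance ≥ 2, with `q ≥ 0` at all their neighbours: impossible. -/
lemma threeGaps (q : Polynomial ℝ) (hq : q ≠ 0) (h4 : Multiset.card q.roots ≤ 4)
    (a z b : ℝ) (haz : a + 2 ≤ z) (hzb : z + 2 ≤ b)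
    (ea : q.eval a = 0) (ez : q.eval z = 0) (eb : q.eval b = 0)
    (na1 : 0 ≤ q.eval (a - 1)) (na2 : 0 ≤ q.eval (a + 1))
    (nz1 : 0 ≤ q.eval (z - 1)) (nz2 : 0 ≤ q.eval (z + 1))
    (nb1 : 0 ≤ q.eval (b - 1)) (nb2 : 0 ≤ q.eval (b + 1)) : False := by
  classical
  by_cases hs1 : z = a + 2 ∧ q.eval (a + 1) = 0
  · exact gapMax q hq h4 a (a + 1) z b (by linarith) (by linarith [hs1.1.ge]) (by linarith)
      ea hs1.2 ez eb nb1 nb2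
  by_cases hs2 : b = z + 2 ∧ q.eval (z + 1) = 0
  · exact gapMin q hq h4 a z (z + 1) b haz (by linarith) (by linarith [hs2.1.ge])
      ea ez hs2.2 eb na1 na2
  -- counting argument
  set P1 : ℝ → Prop := fun y => y ∈ Set.Icc (a - 1) (a + 1) with hP1
  set P2 : ℝ → Prop := fun y => y ∈ Set.Icc (z - 1) (z + 1) with hP2
  set P3 : ℝ → Prop := fun y => y ∈ Set.Icc (b - 1) (b + 1) with hP3
  have c1 : 2 ≤ Multiset.card (q.roots.filter P1) := group_two q hq a ea na1 na2
  have c2 : 2 ≤ Multiset.card (q.roots.filter P2) := group_two q hq z ez nz1 nz2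
  have c3 : 2 ≤ Multiset.card (q.roots.filter P3) := group_two q hq b eb nb1 nb2
  have hle : q.roots.filter P1 + q.roots.filter P2 + q.roots.filter P3 ≤ q.roots := by
    rw [Multiset.le_iff_count]
    intro y
    rcases Nat.eq_zero_or_pos (q.roots.count y) with h0 | hpos
    · simp [Multiset.count_add, Multiset.count_filter, h0]
    · have hyroot : q.eval y = 0 := by
        have : y ∈ q.roots := Multiset.count_pos.mp hpos
        exact (mem_roots'.mp this).2
      have d12 : ¬(P1 y ∧ P2 y) := by
        rintro ⟨⟨_, hy1⟩, ⟨hy2, _⟩⟩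
        have hya : y = a + 1 := by linarith
        exact hs1 ⟨by linarith, hya ▸ hyroot⟩
      have d13 : ¬(P1 y ∧ P3 y) := by
        rintro ⟨⟨_, hy1⟩, ⟨hy2, _⟩⟩; linarith
      have d23 : ¬(P2 y ∧ P3 y) := by
        rintro ⟨⟨_, hy1⟩, ⟨hy2, _⟩⟩
        have hyz : y = z + 1 := by linarith
        exact hs2 ⟨by linarith, hyz ▸ hyroot⟩
      simp only [Multiset.count_add, Multiset.count_filter]
      by_cases h1 : P1 y <;> by_cases h2 : P2 y <;> by_cases h3 : P3 y
      · exact absurd ⟨h1, h2⟩ d12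
      · exact absurd ⟨h1, h2⟩ d12
      · exact absurd ⟨h1, h3⟩ d13
      · simp [h1, h2, h3]
      · exact absurd ⟨h2, h3⟩ d23
      · simp [h1, h2, h3]
      · simp [h1, h2, h3]
      · simp [h1, h2, h3]
  have hcard := Multiset.card_le_card hle
  simp only [Multiset.card_add] at hcard
  omega

theorem stmt_16 (p : Polynomial ℝ) (hdeg : p.degree = 4) (hlead : p.leadingCoeff < 0)
    (c : ℝ) (S : ℤ) (hb : ∀ d : ℤ, 0 ≤ d → d ≤ S → p.eval (d : ℝ) ≤ c) :
    ∃ d₀ d₁ : ℤ,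
      {d : ℤ | 1 ≤ d ∧ d ≤ S - 1 ∧ p.eval (d : ℝ) = c} ⊆ {d₀, d₀ + 1, d₁, d₁ + 1} ∧
      {d : ℤ | 1 ≤ d ∧ d ≤ S - 1 ∧ p.eval (d : ℝ) = c}.ncard ≤ 4 := by
  classical
  set q : Polynomial ℝ := Polynomial.C c - p with hqdef
  have hdq : q.degree = 4 := by
    rw [hqdef, Polynomial.degree_sub_eq_right_of_degree_lt]
    · exact hdeg
    · rw [hdeg]; exact lt_of_le_of_lt (Polynomial.degree_C_le) (by norm_num)
  have hq0 : q ≠ 0 := fun h => by simp [h] at hdq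
  have h4 : Multiset.card q.roots ≤ 4 := by
    have h := q.card_roots'
    rwa [Polynomial.natDegree_eq_of_degree_eq_some hdq] at h
  have hqeval : ∀ x : ℝ, q.eval x = c - p.eval x := by
    intro x; simp [hqdef]
  have hnn : ∀ d : ℤ, 0 ≤ d → d ≤ S → 0 ≤ q.eval (d : ℝ) := by
    intro d h0 hS
    rw [hqeval]
    linarith [hb d h0 hS]
  set Z : Set ℤ := {d : ℤ | 1 ≤ d ∧ d ≤ S - 1 ∧ p.eval (d : ℝ) = c} with hZ
  have hfin : Z.Finite := (Set.finite_Icc 1 (S - 1)).subset (fun x hx => ⟨hx.1, hx.2.1⟩)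
  have hzero : ∀ d ∈ Z, q.eval (d : ℝ) = 0 := by
    intro d hd
    rw [hqeval, hd.2.2]; ring
  have hnbr : ∀ d ∈ Z, 0 ≤ q.eval ((d : ℝ) - 1) ∧ 0 ≤ q.eval ((d : ℝ) + 1) := by
    intro d hd
    obtain ⟨hd1, hd2, -⟩ := hd
    constructor
    · have := hnn (d - 1) (by omega) (by omega)
      push_cast at this
      exact this
    · have := hnn (d + 1) (by omega) (by omega)
      push_cast at this
      exact this
  by_cases hne : Z.Nonempty
  · set F : Finset ℤ := hfin.toFinset with hF
    have hFne : F.Nonempty := by rwa [hF, Set.Finite.toFinset_nonempty]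
    set A : ℤ := F.min' hFne with hA
    set B : ℤ := F.max' hFne with hB
    have hAZ : A ∈ Z := (Set.Finite.mem_toFinset hfin).mp (F.min'_mem hFne)
    have hBZ : B ∈ Z := (Set.Finite.mem_toFinset hfin).mp (F.max'_mem hFne)
    have hmin : ∀ z ∈ Z, A ≤ z := fun z hz =>
      F.min'_le z ((Set.Finite.mem_toFinset hfin).mpr hz)
    have hmax : ∀ z ∈ Z, z ≤ B := fun z hz =>
      F.le_max' z ((Set.Finite.mem_toFinset hfin).mpr hz)
    have hsub : Z ⊆ {A, A + 1, B - 1, B - 1 + 1} := by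
      intro z hz
      have h1 := hmin z hz
      have h2 := hmax z hz
      by_cases hc1 : z ≤ A + 1
      · have : z = A ∨ z = A + 1 := by omega
        rcases this with rfl | rfl <;> simp
      by_cases hc2 : B - 1 ≤ z
      · have : z = B - 1 ∨ z = B - 1 + 1 := by omega
        rcases this with rfl | rfl <;> simp
      exfalso
      have g1 : A + 2 ≤ z := by omega
      have g2 : z + 2 ≤ B := by omega
      have nA := hnbr A hAZ
      have nz := hnbr z hz
      have nB := hnbr B hBZ
      exact threeGaps q hq0 h4 (A : ℝ) (z : ℝ) (B : ℝ)
        (by exact_mod_cast g1) (by exact_mod_cast g2)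
        (hzero A hAZ) (hzero z hz) (hzero B hBZ)
        nA.1 nA.2 nz.1 nz.2 nB.1 nB.2
    refine ⟨A, B - 1, hsub, ?_⟩
    refine le_trans (Set.ncard_le_ncard hsub (Set.toFinite _)) ?_
    have i1 := Set.ncard_insert_le A ({A + 1, B - 1, B - 1 + 1} : Set ℤ)
    have i2 := Set.ncard_insert_le (A + 1) ({B - 1, B - 1 + 1} : Set ℤ)
    have i3 := Set.ncard_insert_le (B - 1) ({B - 1 + 1} : Set ℤ)
    have i4 : ({B - 1 + 1} : Set ℤ).ncard = 1 := Set.ncard_singleton _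
    omega
  · have hZe : Z = ∅ := Set.not_nonempty_iff_eq_empty.mp hne
    exact ⟨0, 0, by rw [hZe]; exact Set.empty_subset _, by rw [hZe]; simp⟩
end
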